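/- arXiv:1308.1653 — 4 statements merged into one kernel-verified Lean document; each statement's English description precedes it below -/
import Mathlib

section
/- If G is a graph of order n, then G contains a book of size at least q(G) - n, where q(G) is the largest eigenvalue of the signless Laplacian of G. -/
open Matrix SimpleGraph Finset BigOperators

variable {V : Type*}

noncomputable def signlessLap (G : SimpleGraph V) [Fintype V] [DecidableEq V]
    [DecidableRel G.Adj] : Matrix V V ℝ :=
  Matrix.diagonal (fun v => (G.degree v : ℝ)) + G.adjMatrix ℝ

theorem signlessLap_isHermitian (G : SimpleGraph V) [Fintype V] [DecidableEq V]
    [DecidableRel G.Adj] : (signlessLap G).IsHermitian := by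
  unfold signlessLap
  apply Matrix.IsHermitian.add
  · exact Matrix.isHermitian_diagonal _
  · ext i j
    simp [Matrix.conjTranspose_apply, SimpleGraph.adjMatrix_apply, adj_comm]

noncomputable def qIndex (G : SimpleGraph V) [Fintype V] [DecidableEq V]
    [DecidableRel G.Adj] : ℝ :=
  ⨆ i, (signlessLap_isHermitian G).eigenvalues i

theorem stmt0 (G : SimpleGraph V) [Fintype V] [DecidableEq V] [DecidableRel G.Adj] :
    qIndex G ≤ (Fintype.card V : ℝ) ∨
      ∃ u v : V, G.Adj u v ∧
        qIndex G - (Fintype.card V : ℝ)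
          ≤ ((G.neighborFinset u ∩ G.neighborFinset v).card : ℝ) := by
  by_cases hV : Nonempty V
  swap
  · left
    rw [not_nonempty_iff] at hV
    rw [qIndex, iSup, Set.range_eq_empty, Real.sSup_empty]
    positivity
  have hQ := signlessLap_isHermitian G
  obtain ⟨i, hi⟩ := Finite.exists_max (fun i => hQ.eigenvalues i)
  have hq : qIndex G = hQ.eigenvalues i :=
    le_antisymm (ciSup_le hi) (le_ciSup (Set.Finite.bddAbove (Set.finite_range _)) i)
  set q := qIndex G with hqdef
  set x : V → ℝ := ⇑(hQ.eigenvectorBasis i) with hx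
  have hxe : signlessLap G *ᵥ x = q • x := by
    rw [hq]; exact hQ.mulVec_eigenvectorBasis i
  have hxne : x ≠ 0 := by
    have := hQ.eigenvectorBasis.orthonormal.ne_zero i
    intro h
    apply this
    ext v
    exact congrFun h v
  -- q ≥ 0 or trivial
  rcases lt_or_ge q 0 with hq0 | hq0
  · exact Or.inl (le_trans hq0.le (Nat.cast_nonneg _))
  -- entries of Q are nonneg
  have hQnn : ∀ u v, 0 ≤ signlessLap G u v := by
    intro u v
    unfold signlessLap
    simp only [Matrix.add_apply, Matrix.diagonal_apply, SimpleGraph.adjMatrix_apply]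
    positivity
  set y : V → ℝ := fun v => |x v| with hy
  have hynn : ∀ v, 0 ≤ y v := fun v => abs_nonneg _
  -- key entrywise inequality
  have key : ∀ u, q * y u ≤ (signlessLap G *ᵥ y) u := by
    intro u
    have h1 : (signlessLap G *ᵥ x) u = q * x u := by
      rw [hxe]; simp
    calc q * y u = |q * x u| := by rw [abs_mul, abs_of_nonneg hq0]
      _ = |(signlessLap G *ᵥ x) u| := by rw [h1]
      _ = |∑ v, signlessLap G u v * x v| := rfl
      _ ≤ ∑ v, |signlessLap G u v * x v| := Finset.abs_sum_le_sum_abs _ _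
      _ = ∑ v, signlessLap G u v * y v := by
          refine Finset.sum_congr rfl fun v _ => ?_
          rw [abs_mul, abs_of_nonneg (hQnn u v)]
      _ = (signlessLap G *ᵥ y) u := rfl
  -- row formula
  have row : ∀ (z : V → ℝ) u, (signlessLap G *ᵥ z) u
      = (G.degree u : ℝ) * z u + ∑ w ∈ G.neighborFinset u, z w := by
    intro z u
    unfold signlessLap
    rw [Matrix.add_mulVec, Pi.add_apply, Matrix.mulVec_diagonal,
      SimpleGraph.adjMatrix_mulVec_apply]
  -- a vertex where y is positive
  obtain ⟨v0, hv0⟩ : ∃ v, x v ≠ 0 := Function.ne_iff.mp hxne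
  have hyv0 : 0 < y v0 := abs_pos.mpr hv0
  -- helper: if some vertex with y > 0 is isolated-ish, q ≤ 0
  have isolated : ∀ u, 0 < y u → G.neighborFinset u = ∅ → q ≤ 0 := by
    intro u hu hnb
    have h := key u
    rw [row, hnb] at h
    have hd : G.degree u = 0 := by
      rw [← SimpleGraph.card_neighborFinset_eq_degree, hnb, Finset.card_empty]
    rw [hd] at h
    simp only [Nat.cast_zero, zero_mul, Finset.sum_empty, add_zero] at h
    rw [mul_comm] at h
    exact nonpos_of_mul_nonpos_right h hu
  set s : Finset (V × V) := Finset.univ.filter (fun p : V × V => G.Adj p.1 p.2) with hs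
  rcases eq_or_ne s ∅ with hse | hse
  · -- no edges at all
    left
    have hnb : G.neighborFinset v0 = ∅ := by
      by_contra h
      obtain ⟨w, hw⟩ := Finset.nonempty_iff_ne_empty.mpr h
      rw [SimpleGraph.mem_neighborFinset] at hw
      have : (v0, w) ∈ s := by simp [hs, hw]
      rw [hse] at this
      exact absurd this (Finset.notMem_empty _)
    exact le_trans (isolated v0 hyv0 hnb) (Nat.cast_nonneg _)
  · obtain ⟨p, hp, hmax⟩ := Finset.exists_max_image s (fun p => y p.1 + y p.2)
      (Finset.nonempty_iff_ne_empty.mpr hse)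
    obtain ⟨u, v⟩ := p
    have huv : G.Adj u v := by simpa [hs] using hp
    set M := y u + y v with hM
    rcases le_or_gt M 0 with hM0 | hM0
    · -- all edge endpoints have y = 0; so a positive vertex is isolated
      left
      have hnb : G.neighborFinset v0 = ∅ := by
        by_contra h
        obtain ⟨w, hw⟩ := Finset.nonempty_iff_ne_empty.mpr h
        rw [SimpleGraph.mem_neighborFinset] at hw
        have hmem : (v0, w) ∈ s := by simp [hs, hw]
        have := hmax _ hmem
        simp only at this
        have h1 : y v0 + y w ≤ 0 := le_trans this hM0
        have : y v0 = 0 := le_antisymm (by linarith [hynn w]) (hynn v0)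
        linarith
      exact le_trans (isolated v0 hyv0 hnb) (Nat.cast_nonneg _)
    · -- main case
      right
      refine ⟨u, v, huv, ?_⟩
      -- bound on rows
      have rowbound : ∀ a : V, G.Adj u a ∨ G.Adj v a →
          ∀ b : V, b ∈ G.neighborFinset a → y a + y b ≤ M := by
        intro a _ b hb
        rw [SimpleGraph.mem_neighborFinset] at hb
        exact hmax (a, b) (by simp [hs, hb])
      have hrow : ∀ a : V, (∀ b ∈ G.neighborFinset a, y a + y b ≤ M) →
          (signlessLap G *ᵥ y) a ≤ (G.degree a : ℝ) * M := by
        intro a ha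
        rw [row]
        have : (G.degree a : ℝ) * y a + ∑ w ∈ G.neighborFinset a, y w
            = ∑ w ∈ G.neighborFinset a, (y a + y w) := by
          rw [Finset.sum_add_distrib, Finset.sum_const,
            SimpleGraph.card_neighborFinset_eq_degree, nsmul_eq_mul]
        rw [this]
        calc ∑ w ∈ G.neighborFinset a, (y a + y w)
            ≤ ∑ _w ∈ G.neighborFinset a, M := Finset.sum_le_sum ha
          _ = (G.degree a : ℝ) * M := by
              rw [Finset.sum_const, SimpleGraph.card_neighborFinset_eq_degree, nsmul_eq_mul]
      have hau : ∀ b ∈ G.neighborFinset u, y u + y b ≤ M := by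
        intro b hb
        rw [SimpleGraph.mem_neighborFinset] at hb
        exact hmax (u, b) (by simp [hs, hb])
      have hav : ∀ b ∈ G.neighborFinset v, y v + y b ≤ M := by
        intro b hb
        rw [SimpleGraph.mem_neighborFinset] at hb
        exact hmax (v, b) (by simp [hs, hb])
      have hqM : q * M ≤ ((G.degree u : ℝ) + (G.degree v : ℝ)) * M := by
        calc q * M = q * y u + q * y v := by ring
          _ ≤ (signlessLap G *ᵥ y) u + (signlessLap G *ᵥ y) v :=
              add_le_add (key u) (key v)
          _ ≤ (G.degree u : ℝ) * M + (G.degree v : ℝ) * M :=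
              add_le_add (hrow u hau) (hrow v hav)
          _ = ((G.degree u : ℝ) + (G.degree v : ℝ)) * M := by ring
      have hqd : q ≤ (G.degree u : ℝ) + (G.degree v : ℝ) :=
        le_of_mul_le_mul_right (by rwa [mul_comm, mul_comm _ q] at hqM) hM0
      -- degree sum bound
      have hcard : (G.neighborFinset u).card + (G.neighborFinset v).card
          = (G.neighborFinset u ∩ G.neighborFinset v).card
            + (G.neighborFinset u ∪ G.neighborFinset v).card := by
        rw [Finset.card_inter_add_card_union]
      have hunion : (G.neighborFinset u ∪ G.neighborFinset v).card ≤ Fintype.card V :=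
        Finset.card_le_univ _
      have h2 : ((G.neighborFinset u).card : ℝ) + ((G.neighborFinset v).card : ℝ)
          = ((G.neighborFinset u ∩ G.neighborFinset v).card : ℝ)
            + ((G.neighborFinset u ∪ G.neighborFinset v).card : ℝ) := by
        exact_mod_cast congrArg (Nat.cast : ℕ → ℝ) hcard
      have h3 : ((G.neighborFinset u ∪ G.neighborFinset v).card : ℝ) ≤ (Fintype.card V : ℝ) :=
        Nat.cast_le.mpr hunion
      have hdu : G.degree u = (G.neighborFinset u).card :=
        (G.card_neighborFinset_eq_degree u).symm
      have hdv : G.degree v = (G.neighborFinset v).card :=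
        (G.card_neighborFinset_eq_degree v).symm
      rw [hdu, hdv] at hqd
      linarith
end

section
/- If G is a triangle-free graph of order n, then the signless Laplacian spectral radius satisfies q(G) ≤ n. -/
open Matrix SimpleGraph Finset BigOperators

variable {V : Type*}

section Aux

variable [Fintype V] [DecidableEq V]

/-- In a triangle-free graph, degrees of adjacent vertices sum to at most `n`. -/
lemma degSum_le (G : SimpleGraph V) [DecidableRel G.Adj] (h : G.CliqueFree 3)
    {u v : V} (huv : G.Adj u v) :
    (G.degree u : ℝ) + (G.degree v : ℝ) ≤ (Fintype.card V : ℝ) := by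
  have hdisj : Disjoint (G.neighborFinset u) (G.neighborFinset v) := by
    rw [Finset.disjoint_left]
    intro w hwu hwv
    rw [SimpleGraph.mem_neighborFinset] at hwu hwv
    exact h {u, v, w} (SimpleGraph.is3Clique_triple_iff.2 ⟨huv, hwu, hwv⟩)
  have h1 : G.degree u + G.degree v ≤ Fintype.card V := by
    rw [← SimpleGraph.card_neighborFinset_eq_degree,
      ← SimpleGraph.card_neighborFinset_eq_degree,
      ← Finset.card_union_of_disjoint hdisj]
    exact Finset.card_le_univ _
  exact_mod_cast h1

lemma sum_nbr_swap (G : SimpleGraph V) [DecidableRel G.Adj] (f : V → V → ℝ) :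
    ∑ u, ∑ v ∈ G.neighborFinset u, f u v = ∑ u, ∑ v ∈ G.neighborFinset u, f v u := by
  have key : ∀ g : V → V → ℝ, (∑ u, ∑ v ∈ G.neighborFinset u, g u v)
      = ∑ u, ∑ v, if G.Adj u v then g u v else 0 := by
    intro g
    refine Finset.sum_congr rfl fun u _ => ?_
    rw [SimpleGraph.neighborFinset_eq_filter, Finset.sum_filter]
  rw [key, key, Finset.sum_comm]
  refine Finset.sum_congr rfl fun u _ => Finset.sum_congr rfl fun v _ => ?_
  by_cases hadj : G.Adj u v
  · rw [if_pos hadj.symm, if_pos hadj]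
  · rw [if_neg (fun hc => hadj hc.symm), if_neg hadj]

lemma qf_eq (G : SimpleGraph V) [DecidableRel G.Adj] (x : V → ℝ) :
    x ⬝ᵥ (signlessLap G *ᵥ x)
      = ∑ u, ∑ v ∈ G.neighborFinset u, (x u ^ 2 + x u * x v) := by
  unfold signlessLap
  simp only [dotProduct, add_mulVec, Pi.add_apply, mulVec_diagonal,
    SimpleGraph.adjMatrix_mulVec_apply]
  refine Finset.sum_congr rfl fun u _ => ?_
  rw [Finset.sum_add_distrib, Finset.sum_const, SimpleGraph.card_neighborFinset_eq_degree,
    ← Finset.mul_sum, nsmul_eq_mul, mul_add]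
  ring

lemma pt_ineq (a b X Y n : ℝ) (ha : 0 < a) (hb : 0 < b) (hab : a + b ≤ n) :
    (X + Y) ^ 2 ≤ n * (X ^ 2 / a + Y ^ 2 / b) := by
  have h1 : (X + Y) ^ 2 ≤ (a + b) * (X ^ 2 / a + Y ^ 2 / b) := by
    rw [div_add_div _ _ (ne_of_gt ha) (ne_of_gt hb), ← mul_div_assoc,
      le_div_iff₀ (by positivity)]
    nlinarith [sq_nonneg (a * Y - b * X)]
  have hnn : (0:ℝ) ≤ X ^ 2 / a + Y ^ 2 / b := by positivity
  exact h1.trans (mul_le_mul_of_nonneg_right hab hnn)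

lemma qf_le (G : SimpleGraph V) [DecidableRel G.Adj] (h : G.CliqueFree 3) (x : V → ℝ) :
    x ⬝ᵥ (signlessLap G *ᵥ x) ≤ (Fintype.card V : ℝ) * (x ⬝ᵥ x) := by
  set n : ℝ := (Fintype.card V : ℝ) with hn
  have hdeg : ∀ {u w : V}, G.Adj u w → (0:ℝ) < G.degree u := by
    intro u w huw
    have : 0 < G.degree u := by
      rw [← SimpleGraph.card_neighborFinset_eq_degree]
      exact Finset.card_pos.2 ⟨w, (SimpleGraph.mem_neighborFinset G u w).2 huw⟩
    exact_mod_cast this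
  -- half-sum bound
  have hhalf : ∀ u : V, ∑ v ∈ G.neighborFinset u, x u ^ 2 / (G.degree u : ℝ) ≤ x u ^ 2 := by
    intro u
    rw [Finset.sum_const, SimpleGraph.card_neighborFinset_eq_degree, nsmul_eq_mul]
    rcases Nat.eq_zero_or_pos (G.degree u) with h0 | h0
    · simp [h0, sq_nonneg]
    · have : (G.degree u : ℝ) ≠ 0 := by positivity
      rw [mul_div_cancel₀ _ this]
  have h2 : 2 * (x ⬝ᵥ (signlessLap G *ᵥ x))
      = ∑ u, ∑ v ∈ G.neighborFinset u, (x u + x v) ^ 2 := by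
    rw [qf_eq]
    have hs := sum_nbr_swap G (fun u v => x u ^ 2 + x u * x v)
    calc 2 * ∑ u, ∑ v ∈ G.neighborFinset u, (x u ^ 2 + x u * x v)
        = (∑ u, ∑ v ∈ G.neighborFinset u, (x u ^ 2 + x u * x v))
          + ∑ u, ∑ v ∈ G.neighborFinset u, (x v ^ 2 + x v * x u) := by
          rw [← hs]; ring
      _ = ∑ u, ∑ v ∈ G.neighborFinset u, (x u + x v) ^ 2 := by
          rw [← Finset.sum_add_distrib]
          refine Finset.sum_congr rfl fun u _ => ?_
          rw [← Finset.sum_add_distrib]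
          refine Finset.sum_congr rfl fun v _ => ?_
          ring
  have h3 : ∑ u, ∑ v ∈ G.neighborFinset u, (x u + x v) ^ 2
      ≤ ∑ u, ∑ v ∈ G.neighborFinset u,
          (n * (x u ^ 2 / (G.degree u : ℝ)) + n * (x v ^ 2 / (G.degree v : ℝ))) := by
    refine Finset.sum_le_sum fun u _ => Finset.sum_le_sum fun v hv => ?_
    have huv : G.Adj u v := (SimpleGraph.mem_neighborFinset G u v).1 hv
    have := pt_ineq (G.degree u : ℝ) (G.degree v : ℝ) (x u) (x v) n
      (hdeg huv) (hdeg huv.symm) (degSum_le G h huv)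
    linarith [this]
  have h4 : ∑ u, ∑ v ∈ G.neighborFinset u,
        (n * (x u ^ 2 / (G.degree u : ℝ)) + n * (x v ^ 2 / (G.degree v : ℝ)))
      ≤ 2 * (n * ∑ u, x u ^ 2) := by
    have hswap := sum_nbr_swap G (fun u v => n * (x v ^ 2 / (G.degree v : ℝ)))
    have hone : ∑ u, ∑ v ∈ G.neighborFinset u, n * (x u ^ 2 / (G.degree u : ℝ))
        ≤ n * ∑ u, x u ^ 2 := by
      rw [Finset.mul_sum]
      refine Finset.sum_le_sum fun u _ => ?_
      rw [← Finset.mul_sum]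
      have hn0 : (0:ℝ) ≤ n := by positivity
      exact mul_le_mul_of_nonneg_left (hhalf u) hn0
    calc ∑ u, ∑ v ∈ G.neighborFinset u,
          (n * (x u ^ 2 / (G.degree u : ℝ)) + n * (x v ^ 2 / (G.degree v : ℝ)))
        = (∑ u, ∑ v ∈ G.neighborFinset u, n * (x u ^ 2 / (G.degree u : ℝ)))
          + ∑ u, ∑ v ∈ G.neighborFinset u, n * (x v ^ 2 / (G.degree v : ℝ)) := by
          rw [← Finset.sum_add_distrib]
          refine Finset.sum_congr rfl fun u _ => Finset.sum_add_distrib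
      _ = (∑ u, ∑ v ∈ G.neighborFinset u, n * (x u ^ 2 / (G.degree u : ℝ)))
          + ∑ u, ∑ v ∈ G.neighborFinset u, n * (x u ^ 2 / (G.degree u : ℝ)) := by
          rw [← hswap]
      _ ≤ 2 * (n * ∑ u, x u ^ 2) := by linarith [hone]
  have hx : x ⬝ᵥ x = ∑ u, x u ^ 2 := by
    simp [dotProduct, sq]
  rw [hx]
  linarith [h2, h3, h4]

end Aux

theorem stmt1 (G : SimpleGraph V) [Fintype V] [DecidableEq V] [DecidableRel G.Adj]
    (h : G.CliqueFree 3) : qIndex G ≤ (Fintype.card V : ℝ) := by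
  unfold qIndex
  rcases isEmpty_or_nonempty V with hV | hV
  · rw [Real.iSup_of_isEmpty]
    simp
  · refine ciSup_le fun i => ?_
    have hA := signlessLap_isHermitian G
    have he := hA.eigenvalues_eq i
    set v : V → ℝ := ⇑(hA.eigenvectorBasis i) with hv
    have hnorm : ∑ u, v u * v u = 1 := by
      have h1 : ‖hA.eigenvectorBasis i‖ = 1 := hA.eigenvectorBasis.orthonormal.1 i
      have h2 := real_inner_self_eq_norm_sq (hA.eigenvectorBasis i)
      rw [PiLp.inner_apply] at h2
      simp only [RCLike.inner_apply, starRingEnd_apply, star_trivial] at h2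
      rw [h1] at h2
      simpa using h2
    have hq := qf_le G h v
    have hstar : star v = v := by
      funext u; simp
    rw [he]
    simp only [RCLike.re_to_real] at *
    have hxx : v ⬝ᵥ v = 1 := by simpa [dotProduct] using hnorm
    calc (star v) ⬝ᵥ (signlessLap G *ᵥ v) = v ⬝ᵥ (signlessLap G *ᵥ v) := by rw [hstar]
      _ ≤ (Fintype.card V : ℝ) * (v ⬝ᵥ v) := hq
      _ = (Fintype.card V : ℝ) := by rw [hxx, mul_one]
end

section
/- If G is a graph of order n with clique number ω(G) = ω, then q(G) ≤ 2(1 − 1/ω)·n, where q(G) is the signless Laplacian spectral radius. -/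
open Matrix SimpleGraph Finset BigOperators

variable {V : Type*}

section Aux
set_option linter.unusedSectionVars false

variable (G : SimpleGraph V) [Fintype V] [DecidableEq V] [DecidableRel G.Adj]

private lemma adjR_nonneg (a b : V) : (0:ℝ) ≤ G.adjMatrix ℝ a b := by
  by_cases h : G.Adj a b <;> simp [h]

private lemma adjR_le_one (a b : V) : G.adjMatrix ℝ a b ≤ 1 := by
  by_cases h : G.Adj a b <;> simp [h]

private lemma adjR_symm (a b : V) : G.adjMatrix ℝ a b = G.adjMatrix ℝ b a := by
  simp [SimpleGraph.adjMatrix_apply, adj_comm]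

private lemma adjR_diag (a : V) : G.adjMatrix ℝ a a = 0 := by simp

private lemma degree_eq_sum (a : V) :
    (G.degree a : ℝ) = ∑ b, G.adjMatrix ℝ a b := by
  rw [SimpleGraph.adjMatrix]
  simp only [Matrix.of_apply]
  rw [Finset.sum_boole]
  congr 1
  rw [SimpleGraph.degree, SimpleGraph.neighborFinset_eq_filter]

/-- Motzkin–Straus inequality (upper-bound direction), support-size induction. -/
private lemma motzkin_straus_aux :
    ∀ (k : ℕ) (x : V → ℝ), (∀ a, 0 ≤ x a) →
      (univ.filter fun a => x a ≠ 0).card = k →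
      ∑ a, ∑ b, G.adjMatrix ℝ a b * (x a * x b)
        ≤ (1 - 1/(G.cliqueNum : ℝ)) * (∑ a, x a)^2 := by
  intro k
  induction k using Nat.strong_induction_on with
  | _ k IH =>
    intro x hx hcard
    set s : Finset V := univ.filter fun a => x a ≠ 0 with hs
    have hxs : ∀ a, a ∉ s → x a = 0 := by
      intro a ha
      by_contra h
      exact ha (by simp [hs, h])
    by_cases hcl : (↑s : Set V).Pairwise G.Adj
    · -- support is a clique
      rcases s.eq_empty_or_nonempty with hse | hsne
      · have hx0 : ∀ a, x a = 0 := fun a => hxs a (by simp [hse])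
        simp [hx0]
      · have hclique : G.IsClique (↑s : Set V) := hcl
        have hcardle : s.card ≤ G.cliqueNum :=
          SimpleGraph.IsClique.card_le_cliqueNum (tc := hclique)
        have hk1 : 1 ≤ s.card := Finset.card_pos.mpr hsne
        have hω1 : 1 ≤ G.cliqueNum := le_trans hk1 hcardle
        have hωpos : (0:ℝ) < (G.cliqueNum : ℝ) := by exact_mod_cast hω1
        have hCS : (∑ a, x a)^2 ≤ (G.cliqueNum : ℝ) * ∑ a, (x a)^2 := by
          have h1 : (∑ a, x a) = ∑ a ∈ s, x a := by
            rw [hs, Finset.sum_filter_ne_zero]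
          have h2 : (∑ a ∈ s, x a)^2 ≤ (s.card : ℝ) * ∑ a ∈ s, (x a)^2 :=
            sq_sum_le_card_mul_sum_sq
          have h3 : ∑ a ∈ s, (x a)^2 ≤ ∑ a, (x a)^2 :=
            Finset.sum_le_sum_of_subset_of_nonneg (Finset.subset_univ s)
              (fun a _ _ => sq_nonneg _)
          have h4 : (s.card : ℝ) ≤ (G.cliqueNum : ℝ) := by exact_mod_cast hcardle
          calc (∑ a, x a)^2 = (∑ a ∈ s, x a)^2 := by rw [h1]
            _ ≤ (s.card : ℝ) * ∑ a ∈ s, (x a)^2 := h2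
            _ ≤ (G.cliqueNum : ℝ) * ∑ a, (x a)^2 := by
                apply mul_le_mul h4 h3 (Finset.sum_nonneg fun a _ => sq_nonneg _)
                  (le_of_lt hωpos)
        have hbound : ∑ a, ∑ b, G.adjMatrix ℝ a b * (x a * x b)
            ≤ (∑ a, x a)^2 - ∑ a, (x a)^2 := by
          have hterm : ∀ a b : V, G.adjMatrix ℝ a b * (x a * x b)
              ≤ x a * x b - (if a = b then (x a)^2 else 0) := by
            intro a b
            by_cases h : a = b
            · subst h
              simp [adjR_diag, sq]
            · simp only [h, if_false, sub_zero]
              exact mul_le_of_le_one_left (mul_nonneg (hx a) (hx b)) (adjR_le_one G a b)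
          have hsum2 : ∑ a : V, ∑ b : V, (if a = b then (x a)^2 else 0) = ∑ a, (x a)^2 := by
            refine Finset.sum_congr rfl fun a _ => ?_
            simp
          calc ∑ a, ∑ b, G.adjMatrix ℝ a b * (x a * x b)
              ≤ ∑ a, ∑ b, (x a * x b - (if a = b then (x a)^2 else 0)) :=
                Finset.sum_le_sum fun a _ => Finset.sum_le_sum fun b _ => hterm a b
            _ = (∑ a, x a)^2 - ∑ a, (x a)^2 := by
                simp only [Finset.sum_sub_distrib, hsum2]
                rw [sq (∑ a, x a), Finset.sum_mul_sum]
        have hfin : (∑ a, x a)^2 - ∑ a, (x a)^2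
            ≤ (1 - 1/(G.cliqueNum : ℝ)) * (∑ a, x a)^2 := by
          have hinv : 1/(G.cliqueNum : ℝ) * (∑ a, x a)^2 ≤ ∑ a, (x a)^2 := by
            rw [div_mul_eq_mul_div, one_mul, div_le_iff₀ hωpos]
            linarith [hCS]
          nlinarith [hinv]
        linarith
    · -- support is not a clique : shift weight
      simp only [Set.Pairwise] at hcl
      push_neg at hcl
      obtain ⟨i0, hi0, j0, hj0, hij0, hnadj0⟩ := hcl
      rw [Finset.mem_coe] at hi0 hj0
      have key : ∀ i j : V, i ∈ s → j ∈ s → i ≠ j → ¬ G.Adj i j →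
          (∑ b, G.adjMatrix ℝ j b * x b) ≤ (∑ b, G.adjMatrix ℝ i b * x b) →
          ∑ a, ∑ b, G.adjMatrix ℝ a b * (x a * x b)
            ≤ (1 - 1/(G.cliqueNum : ℝ)) * (∑ a, x a)^2 := by
        intro i j his hjs hij hnadj hS
        set Sf : V → ℝ := fun a => ∑ b, G.adjMatrix ℝ a b * x b with hSf
        set d : V → ℝ := fun a => (if a = i then x j else 0) + (if a = j then -(x j) else 0)
          with hd
        set y : V → ℝ := fun a => x a + d a with hy
        have hAii : G.adjMatrix ℝ i i = 0 := adjR_diag G i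
        have hAjj : G.adjMatrix ℝ j j = 0 := adjR_diag G j
        have hAij : G.adjMatrix ℝ i j = 0 := by simp [hnadj]
        have hAji : G.adjMatrix ℝ j i = 0 := by rw [adjR_symm]; exact hAij
        have hdi : d i = x j := by simp [hd, hij]
        have hdj : d j = -(x j) := by simp [hd, Ne.symm hij]
        have hdo : ∀ a, a ≠ i → a ≠ j → d a = 0 := by
          intro a h1 h2; simp [hd, h1, h2]
        have hyi : y i = x i + x j := by rw [hy]; simp only; rw [hdi]
        have hyj : y j = 0 := by rw [hy]; simp only; rw [hdj]; ring
        have hyo : ∀ a, a ≠ i → a ≠ j → y a = x a := by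
          intro a h1 h2; rw [hy]; simp only; rw [hdo a h1 h2]; ring
        have hynn : ∀ a, 0 ≤ y a := by
          intro a
          by_cases h1 : a = i
          · rw [h1, hyi]; exact add_nonneg (hx i) (hx j)
          · by_cases h2 : a = j
            · rw [h2, hyj]
            · rw [hyo a h1 h2]; exact hx a
        -- linear sum against d
        have hlin : ∀ g : V → ℝ, ∑ b, g b * d b = g i * x j + g j * (-(x j)) := by
          intro g
          have hterm : ∀ b, g b * d b
              = (if b = i then g b * x j else 0) + (if b = j then g b * (-(x j)) else 0) := by
            intro b
            by_cases h1 : b = i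
            · subst h1
              simp [hd, hij]
            · by_cases h2 : b = j
              · subst h2
                simp [hd, Ne.symm hij]
              · simp [hd, h1, h2]
          rw [Finset.sum_congr rfl fun b _ => hterm b, Finset.sum_add_distrib]
          simp [Finset.sum_ite_eq']
        have hdsum : ∑ a, d a = 0 := by
          have := hlin (fun _ => (1:ℝ))
          simpa using this
        have hysum : ∑ a, y a = ∑ a, x a := by
          rw [hy]
          simp only
          rw [Finset.sum_add_distrib, hdsum, add_zero]
        -- inner sums
        have hSy : ∀ a, ∑ b, G.adjMatrix ℝ a b * y b
            = Sf a + (G.adjMatrix ℝ a i * x j + G.adjMatrix ℝ a j * (-(x j))) := by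
          intro a
          have : ∀ b, G.adjMatrix ℝ a b * y b
              = G.adjMatrix ℝ a b * x b + G.adjMatrix ℝ a b * d b := by
            intro b; rw [hy]; simp only; ring
          rw [Finset.sum_congr rfl fun b _ => this b, Finset.sum_add_distrib,
            hlin (fun b => G.adjMatrix ℝ a b)]
        have hxAi : ∑ a, x a * G.adjMatrix ℝ a i = Sf i := by
          rw [hSf]
          refine Finset.sum_congr rfl fun a _ => ?_
          rw [adjR_symm]; ring
        have hxAj : ∑ a, x a * G.adjMatrix ℝ a j = Sf j := by
          rw [hSf]
          refine Finset.sum_congr rfl fun a _ => ?_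
          rw [adjR_symm]; ring
        have hfx : ∑ a, x a * Sf a = ∑ a, ∑ b, G.adjMatrix ℝ a b * (x a * x b) := by
          refine Finset.sum_congr rfl fun a _ => ?_
          rw [hSf]; simp only; rw [Finset.mul_sum]
          exact Finset.sum_congr rfl fun b _ => by ring
        -- e-lemmas : sums of y against various vectors
        have hdlin : ∀ g : V → ℝ, ∑ a, d a * g a = x j * g i + (-(x j)) * g j := by
          intro g
          have : ∀ a, d a * g a = g a * d a := fun a => by ring
          rw [Finset.sum_congr rfl fun a _ => this a, hlin g]
          ring
        have e1 : ∑ a, y a * Sf a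
            = (∑ a, x a * Sf a) + (x j * Sf i + (-(x j)) * Sf j) := by
          have : ∀ a, y a * Sf a = x a * Sf a + d a * Sf a := by
            intro a; rw [hy]; simp only; ring
          rw [Finset.sum_congr rfl fun a _ => this a, Finset.sum_add_distrib, hdlin Sf]
        have e2 : ∑ a, y a * G.adjMatrix ℝ a i
            = Sf i + (x j * G.adjMatrix ℝ i i + (-(x j)) * G.adjMatrix ℝ j i) := by
          have : ∀ a, y a * G.adjMatrix ℝ a i
              = x a * G.adjMatrix ℝ a i + d a * G.adjMatrix ℝ a i := by
            intro a; rw [hy]; simp only; ring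
          rw [Finset.sum_congr rfl fun a _ => this a, Finset.sum_add_distrib, hxAi,
            hdlin (fun a => G.adjMatrix ℝ a i)]
        have e3 : ∑ a, y a * G.adjMatrix ℝ a j
            = Sf j + (x j * G.adjMatrix ℝ i j + (-(x j)) * G.adjMatrix ℝ j j) := by
          have : ∀ a, y a * G.adjMatrix ℝ a j
              = x a * G.adjMatrix ℝ a j + d a * G.adjMatrix ℝ a j := by
            intro a; rw [hy]; simp only; ring
          rw [Finset.sum_congr rfl fun a _ => this a, Finset.sum_add_distrib, hxAj,
            hdlin (fun a => G.adjMatrix ℝ a j)]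
        -- the quadratic form identity
        have hiden : ∑ a, ∑ b, G.adjMatrix ℝ a b * (y a * y b)
            = ∑ a, ∑ b, G.adjMatrix ℝ a b * (x a * x b)
              + 2 * (x j * (Sf i - Sf j)) := by
          have step1 : ∀ a, ∑ b, G.adjMatrix ℝ a b * (y a * y b)
              = y a * Sf a + ((y a * G.adjMatrix ℝ a i) * x j
                + (y a * G.adjMatrix ℝ a j) * (-(x j))) := by
            intro a
            have h0 : ∀ b, G.adjMatrix ℝ a b * (y a * y b)
                = y a * (G.adjMatrix ℝ a b * y b) := by
              intro b; ring
            rw [Finset.sum_congr rfl fun b _ => h0 b, ← Finset.mul_sum, hSy a]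
            ring
          rw [Finset.sum_congr rfl fun a _ => step1 a, Finset.sum_add_distrib,
            Finset.sum_add_distrib, ← Finset.sum_mul, ← Finset.sum_mul, e1, e2, e3, hfx,
            hAii, hAjj, hAij, hAji]
          ring
        -- support of y is strictly smaller
        have hsub : (univ.filter fun a => y a ≠ 0) ⊆ s.erase j := by
          intro a ha
          simp only [Finset.mem_filter, Finset.mem_univ, true_and] at ha
          rw [Finset.mem_erase]
          constructor
          · intro h; exact ha (h ▸ hyj)
          · by_cases h1 : a = i
            · subst h1; exact his
            · by_cases h2 : a = j
              · exact absurd (h2 ▸ hyj) ha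
              · rw [hs, Finset.mem_filter]
                exact ⟨Finset.mem_univ a, by rwa [← hyo a h1 h2]⟩
        have hcard' : (univ.filter fun a => y a ≠ 0).card < k := by
          calc (univ.filter fun a => y a ≠ 0).card ≤ (s.erase j).card :=
                Finset.card_le_card hsub
            _ < s.card := Finset.card_erase_lt_of_mem hjs
            _ = k := hcard
        have hIH := IH _ hcard' y hynn rfl
        rw [hysum] at hIH
        have hmono : ∑ a, ∑ b, G.adjMatrix ℝ a b * (x a * x b)
            ≤ ∑ a, ∑ b, G.adjMatrix ℝ a b * (y a * y b) := by
          rw [hiden]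
          have : 0 ≤ 2 * (x j * (Sf i - Sf j)) := by
            apply mul_nonneg (by norm_num)
            exact mul_nonneg (hx j) (by simp only [sub_nonneg]; exact hS)
          linarith
        linarith
      rcases le_total (∑ b, G.adjMatrix ℝ j0 b * x b) (∑ b, G.adjMatrix ℝ i0 b * x b) with h | h
      · exact key i0 j0 hi0 hj0 hij0 hnadj0 h
      · exact key j0 i0 hj0 hi0 (Ne.symm hij0) (fun hadj => hnadj0 hadj.symm) h


private lemma cliqueNum_pos [Nonempty V] : 1 ≤ G.cliqueNum := by
  obtain ⟨a⟩ := ‹Nonempty V›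
  have hcl : G.IsClique (↑({a} : Finset V) : Set V) := by
    simp [SimpleGraph.isClique_iff]
  have := SimpleGraph.IsClique.card_le_cliqueNum (tc := hcl)
  simpa using this

private lemma two_le_cliqueNum_of_adj {a b : V} (h : G.Adj a b) : 2 ≤ G.cliqueNum := by
  have hne : a ≠ b := G.ne_of_adj h
  have hclique : G.IsClique (↑({a, b} : Finset V) : Set V) := by
    rw [Finset.coe_insert, Finset.coe_singleton]
    exact SimpleGraph.isClique_pair.mpr (fun _ => h)
  have hcard : ({a, b} : Finset V).card = 2 := Finset.card_pair hne
  have := SimpleGraph.IsClique.card_le_cliqueNum (tc := hclique)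
  omega

/-- The key quadratic form bound. -/
private lemma form_bound [Nonempty V] (v : V → ℝ) :
    ∑ a, ∑ b, signlessLap G a b * (v a * v b)
      ≤ 2 * (1 - 1/(G.cliqueNum : ℝ)) * (Fintype.card V : ℝ) * (∑ a, (v a)^2) := by
  set x : V → ℝ := fun a => |v a| with hxdef
  have hx : ∀ a, 0 ≤ x a := fun a => abs_nonneg _
  have hQnn : ∀ a b, 0 ≤ signlessLap G a b := by
    intro a b
    unfold signlessLap
    simp only [Matrix.add_apply, Matrix.diagonal_apply]
    apply add_nonneg
    · split <;> positivity
    · exact adjR_nonneg G a b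
  have habs : ∑ a, ∑ b, signlessLap G a b * (v a * v b)
      ≤ ∑ a, ∑ b, signlessLap G a b * (x a * x b) := by
    refine Finset.sum_le_sum fun a _ => Finset.sum_le_sum fun b _ => ?_
    apply mul_le_mul_of_nonneg_left _ (hQnn a b)
    calc v a * v b ≤ |v a * v b| := le_abs_self _
      _ = x a * x b := by rw [abs_mul]
  have hsq : ∑ a, (x a)^2 = ∑ a, (v a)^2 :=
    Finset.sum_congr rfl fun a _ => sq_abs _
  rw [← hsq]
  refine le_trans habs ?_
  set s1 : ℝ := ∑ a, x a with hs1
  set s2 : ℝ := ∑ a, (x a)^2 with hs2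
  set n : ℝ := (Fintype.card V : ℝ) with hn
  have hsplit : ∑ a, ∑ b, signlessLap G a b * (x a * x b)
      = (∑ a, (G.degree a : ℝ) * (x a)^2)
        + ∑ a, ∑ b, G.adjMatrix ℝ a b * (x a * x b) := by
    unfold signlessLap
    simp only [Matrix.add_apply, Matrix.diagonal_apply, add_mul, Finset.sum_add_distrib]
    congr 1
    refine Finset.sum_congr rfl fun a _ => ?_
    simp only [ite_mul, zero_mul, Finset.sum_ite_eq, Finset.mem_univ, if_true]
    ring
  have hdeg : ∑ a, (G.degree a : ℝ) * (x a)^2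
      = ∑ a, ∑ b, G.adjMatrix ℝ a b * (x a)^2 := by
    refine Finset.sum_congr rfl fun a _ => ?_
    rw [degree_eq_sum, Finset.sum_mul]
  set P : ℝ := ∑ a, ∑ b, G.adjMatrix ℝ a b * (x a * x b) with hP
  set D : ℝ := ∑ a, ∑ b, G.adjMatrix ℝ a b * (x a)^2 with hD
  set W : ℝ := ∑ a, ∑ b, G.adjMatrix ℝ a b * (x a - x b)^2 with hW
  have hWDP : W = 2*D - 2*P := by
    have hDb : D = ∑ a, ∑ b, G.adjMatrix ℝ a b * (x b)^2 := by
      rw [hD, Finset.sum_comm]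
      refine Finset.sum_congr rfl fun a _ => Finset.sum_congr rfl fun b _ => ?_
      rw [adjR_symm]
    calc W = ∑ a, ∑ b, (G.adjMatrix ℝ a b * (x a)^2 + G.adjMatrix ℝ a b * (x b)^2
          - 2 * (G.adjMatrix ℝ a b * (x a * x b))) := by
          refine Finset.sum_congr rfl fun a _ => Finset.sum_congr rfl fun b _ => ?_
          ring
      _ = D + (∑ a, ∑ b, G.adjMatrix ℝ a b * (x b)^2) - 2*P := by
          simp only [Finset.sum_add_distrib, Finset.sum_sub_distrib, ← Finset.mul_sum, hP, hD]
      _ = 2*D - 2*P := by rw [← hDb]; ring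
  have hWle : W ≤ 2*n*s2 - 2*s1^2 := by
    have hterm : ∀ a b : V, G.adjMatrix ℝ a b * (x a - x b)^2 ≤ (x a - x b)^2 := by
      intro a b
      exact mul_le_of_le_one_left (sq_nonneg _) (adjR_le_one G a b)
    have hexp : ∑ a : V, ∑ b : V, (x a - x b)^2 = 2*n*s2 - 2*s1^2 := by
      have h1 : ∀ a b : V, (x a - x b)^2 = (x a)^2 + (x b)^2 - 2*(x a * x b) := by
        intro a b; ring
      simp only [h1, Finset.sum_add_distrib, Finset.sum_sub_distrib,
        Finset.sum_const, Finset.card_univ, nsmul_eq_mul, ← Finset.mul_sum]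
      rw [← Finset.sum_mul]
      rw [← hs1, ← hs2, ← hn]
      ring
    calc W ≤ ∑ a, ∑ b, (x a - x b)^2 :=
          Finset.sum_le_sum fun a _ => Finset.sum_le_sum fun b _ => hterm a b
      _ = 2*n*s2 - 2*s1^2 := hexp
  have hMS : P ≤ (1 - 1/(G.cliqueNum : ℝ)) * s1^2 := motzkin_straus_aux G _ x hx rfl
  have hCS : s1^2 ≤ n * s2 := by
    rw [hs1, hs2, hn, ← Finset.card_univ]
    exact sq_sum_le_card_mul_sum_sq
  have hs2nn : 0 ≤ s2 := Finset.sum_nonneg fun a _ => sq_nonneg _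
  by_cases hω2 : 2 ≤ G.cliqueNum
  · have hωpos : (0:ℝ) < (G.cliqueNum : ℝ) := by
      have h0 : (0:ℕ) < G.cliqueNum := by omega
      exact_mod_cast h0
    have hu : 1/(G.cliqueNum : ℝ) ≤ 1/2 := by
      apply one_div_le_one_div_of_le (by norm_num)
      exact_mod_cast hω2
    have hunn : 0 ≤ 1/(G.cliqueNum : ℝ) := by positivity
    have hform : ∑ a, ∑ b, signlessLap G a b * (x a * x b) = 2*P + W/2 := by
      rw [hsplit, hdeg]
      linarith [hWDP]
    rw [hform]
    set u : ℝ := 1/(G.cliqueNum : ℝ) with hudef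
    nlinarith [hMS, hWle, hCS,
      mul_nonneg (sub_nonneg.mpr hCS) (sub_nonneg.mpr (by linarith : 2*u ≤ 1))]
  · have hnoadj : ∀ a b : V, ¬ G.Adj a b := by
      intro a b hadj
      exact hω2 (two_le_cliqueNum_of_adj G hadj)
    have hQ0 : ∀ a b : V, signlessLap G a b = 0 := by
      intro a b
      unfold signlessLap
      simp only [Matrix.add_apply, Matrix.diagonal_apply]
      have hdeg0 : G.degree a = 0 := by
        simp only [SimpleGraph.degree, Finset.card_eq_zero]
        rw [Finset.eq_empty_iff_forall_notMem]
        intro c hc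
        rw [SimpleGraph.mem_neighborFinset] at hc
        exact hnoadj a c hc
      have hA0 : G.adjMatrix ℝ a b = 0 := by simp [hnoadj a b]
      rw [hA0, hdeg0]
      simp
    have hω1 : G.cliqueNum = 1 := le_antisymm (by omega) (cliqueNum_pos G)
    simp only [hQ0, zero_mul, Finset.sum_const_zero, hω1, Nat.cast_one]
    norm_num

end Aux

theorem stmt6 (G : SimpleGraph V) [Fintype V] [DecidableEq V] [DecidableRel G.Adj]
    [Nonempty V] :
    qIndex G ≤ 2 * (1 - 1 / (G.cliqueNum : ℝ)) * (Fintype.card V : ℝ) := by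
  rw [qIndex]
  apply ciSup_le
  intro i
  set hH := signlessLap_isHermitian G with hHdef
  set w : EuclideanSpace ℝ V := hH.eigenvectorBasis i with hwdef
  have hunit : ∑ a, (w a)^2 = 1 := by
    have hnorm : ‖w‖ = 1 := hH.eigenvectorBasis.orthonormal.1 i
    have hn2 : ‖w‖ = Real.sqrt (∑ a, ‖w a‖^2) := EuclideanSpace.norm_eq w
    rw [hnorm] at hn2
    have hnn : 0 ≤ ∑ a, ‖w a‖^2 := Finset.sum_nonneg fun a _ => sq_nonneg _
    have h3 : ∑ a, ‖w a‖^2 = 1 := by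
      nlinarith [Real.sq_sqrt hnn, hn2.symm]
    simpa [Real.norm_eq_abs, sq_abs] using h3
  have hmv := hH.mulVec_eigenvectorBasis i
  have hmv' : ∀ a, ∑ b, signlessLap G a b * w b = hH.eigenvalues i * w a := by
    intro a
    have hc := congrFun hmv a
    simp only [Matrix.mulVec, dotProduct, Pi.smul_apply, smul_eq_mul] at hc
    exact hc
  have hray : hH.eigenvalues i = ∑ a, ∑ b, signlessLap G a b * (w a * w b) := by
    calc hH.eigenvalues i = hH.eigenvalues i * ∑ a, (w a)^2 := by rw [hunit, mul_one]
      _ = ∑ a, w a * (hH.eigenvalues i * w a) := by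
          rw [Finset.mul_sum]
          exact Finset.sum_congr rfl fun a _ => by ring
      _ = ∑ a, w a * (∑ b, signlessLap G a b * w b) :=
          Finset.sum_congr rfl fun a _ => by rw [hmv' a]
      _ = ∑ a, ∑ b, signlessLap G a b * (w a * w b) := by
          refine Finset.sum_congr rfl fun a _ => ?_
          rw [Finset.mul_sum]
          exact Finset.sum_congr rfl fun b _ => by ring
  rw [hray]
  have hfb := form_bound G (fun a => w a)
  rw [hunit] at hfb
  simpa using hfb
end

section
/- If G is a graph of order n with chromatic number χ, then q(G) ≤ 2(1 − 1/χ)·n. -/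
open Matrix SimpleGraph Finset BigOperators

variable {V : Type*}

/-! ### Auxiliary lemmas -/

lemma myStep3 (k : ℕ) (hk : 2 ≤ k) (t : Fin k → ℝ) (ht : ∀ i, 0 ≤ t i)
    (htsum : ∑ i, t i = 1) :
    ∑ i, t i / (((k:ℝ)-2)/k + 2 * t i) ≤ 1 := by
  have hk0 : (0:ℝ) < k := by positivity
  have hk2 : (2:ℝ) ≤ k := by exact_mod_cast hk
  set c : ℝ := ((k:ℝ)-2)/k with hc
  have hcn : 0 ≤ c := div_nonneg (by linarith) hk0.le
  have hkc : (k:ℝ) * c = k - 2 := by rw [hc, mul_div_cancel₀ _ hk0.ne']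
  have hterm : ∀ i, t i / (c + 2 * t i) ≤ 1/2 - c/2 * (1/(c + 2 * t i)) := by
    intro i
    rcases eq_or_lt_of_le (by linarith [ht i] : (0:ℝ) ≤ c + 2 * t i) with h | h
    · have ht0 : t i = 0 := by linarith [ht i]
      have hc0 : c = 0 := by linarith [ht i]
      rw [ht0, hc0]; norm_num
    · have : 1/2 - c/2 * (1/(c + 2 * t i)) = t i / (c + 2 * t i) := by
        field_simp
        ring
      rw [this]
  calc ∑ i, t i / (c + 2 * t i) ≤ ∑ i : Fin k, (1/2 - c/2 * (1/(c + 2 * t i))) :=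
        Finset.sum_le_sum fun i _ => hterm i
    _ = (k:ℝ)/2 - c/2 * ∑ i, 1/(c + 2*t i) := by
        rw [Finset.sum_sub_distrib, ← Finset.mul_sum, Finset.sum_const, Finset.card_univ]
        simp [nsmul_eq_mul]
        ring
    _ ≤ 1 := by
        have key : (k:ℝ) - 2 ≤ c * ∑ i, 1/(c + 2*t i) := by
          rcases eq_or_lt_of_le hcn with hc0 | hc0
          · have h2 : (k:ℝ) - 2 = 0 := by rw [← hkc, ← hc0]; ring
            rw [h2, ← hc0]; simp
          · have hpos : ∀ i : Fin k, 0 < c + 2 * t i := fun i => by linarith [ht i]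
            have hCS : (∑ _i : Fin k, (1:ℝ))^2
                ≤ (∑ i, (c + 2*t i)) * ∑ i, 1/(c + 2*t i) := by
              apply Finset.sum_sq_le_sum_mul_sum_of_sq_eq_mul
              · exact fun i _ => (hpos i).le
              · exact fun i _ => (one_div_pos.mpr (hpos i)).le
              · intro i _
                rw [one_pow, mul_one_div, div_self (hpos i).ne']
            have hone : (∑ _i : Fin k, (1:ℝ)) = k := by
              rw [Finset.sum_const, Finset.card_univ]; simp
            have hsum : ∑ i, (c + 2*t i) = (k:ℝ) := by
              rw [Finset.sum_add_distrib, Finset.sum_const, Finset.card_univ, ← Finset.mul_sum,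
                htsum]
              simp [nsmul_eq_mul]
              linarith
            rw [hone, hsum] at hCS
            have hinv : (k:ℝ) ≤ ∑ i, 1/(c + 2*t i) := by nlinarith
            calc (k:ℝ) - 2 = c * k := by linarith
              _ ≤ c * ∑ i, 1/(c + 2*t i) := mul_le_mul_of_nonneg_left hinv hcn
        linarith

lemma myStep2 (c m t s : ℝ) (hc : 0 ≤ c) (hm : 0 ≤ m) (ht : 0 ≤ t) (hst : s^2 ≤ m*t) :
    s^2/(c*m + m*t + s^2) ≤ t/(c + 2*t) := by
  rcases eq_or_ne s 0 with h | h
  · rw [h]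
    simp
    positivity
  · have hs2 : 0 < s^2 := by positivity
    have hmt : 0 < m*t := lt_of_lt_of_le hs2 hst
    have hm' : 0 < m := by nlinarith
    have ht' : 0 < t := by nlinarith
    have hd1 : 0 < c*m + m*t + s^2 := by positivity
    have hd2 : 0 < c + 2*t := by linarith
    rw [div_le_div_iff₀ hd1 hd2]
    nlinarith [mul_le_mul_of_nonneg_left hst hc, mul_le_mul_of_nonneg_left hst ht]

lemma myCore (k : ℕ) (hk : 2 ≤ k) (t s m : Fin k → ℝ)
    (ht : ∀ i, 0 ≤ t i) (hm : ∀ i, 0 ≤ m i) (hst : ∀ i, (s i)^2 ≤ m i * t i)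
    (htsum : ∑ i, t i = 1) :
    (∑ i, s i)^2 ≤ ∑ i, (((k:ℝ)-2)/k * (m i) + m i * t i + (s i)^2) := by
  have hk0 : (0:ℝ) < k := by positivity
  have hk2 : (2:ℝ) ≤ k := by exact_mod_cast hk
  set c : ℝ := ((k:ℝ)-2)/k with hc
  have hcn : 0 ≤ c := div_nonneg (by linarith) hk0.le
  set u : Fin k → ℝ := fun i => c * m i + m i * t i + (s i)^2 with hu
  have hun : ∀ i, 0 ≤ u i := fun i => by
    have h2 : 0 ≤ m i * t i := mul_nonneg (hm i) (ht i)
    have h3 : 0 ≤ c * m i := mul_nonneg hcn (hm i)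
    have : u i = c * m i + m i * t i + (s i)^2 := rfl
    rw [this]
    nlinarith [sq_nonneg (s i)]
  have h1 : (∑ i, s i)^2 ≤ (∑ i, u i) * (∑ i, (s i)^2 / u i) := by
    apply Finset.sum_sq_le_sum_mul_sum_of_sq_eq_mul
    · exact fun i _ => hun i
    · exact fun i _ => div_nonneg (sq_nonneg _) (hun i)
    · intro i _
      rcases eq_or_ne (u i) 0 with h | h
      · have h' : c * m i + m i * t i + (s i)^2 = 0 := h
        have h2 : 0 ≤ m i * t i := mul_nonneg (hm i) (ht i)
        have h3 : 0 ≤ c * m i := mul_nonneg hcn (hm i)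
        have hs0 : (s i)^2 = 0 := by nlinarith [sq_nonneg (s i)]
        rw [hs0, h]; simp
      · rw [mul_comm, div_mul_cancel₀ _ h]
  have h2 : (∑ i, (s i)^2 / u i) ≤ ∑ i, t i / (c + 2 * t i) := by
    apply Finset.sum_le_sum
    intro i _
    exact myStep2 c (m i) (t i) (s i) hcn (hm i) (ht i) (hst i)
  have h3 := myStep3 k hk t ht htsum
  have h4 : (∑ i, (s i)^2 / u i) ≤ 1 := le_trans h2 h3
  have h5 : 0 ≤ ∑ i, u i := Finset.sum_nonneg fun i _ => hun i
  calc (∑ i, s i)^2 ≤ (∑ i, u i) * (∑ i, (s i)^2 / u i) := h1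
    _ ≤ (∑ i, u i) * 1 := mul_le_mul_of_nonneg_left h4 h5
    _ = ∑ i, (c * m i + m i * t i + (s i)^2) := by rw [mul_one]

lemma myRayleigh [Fintype V] [DecidableEq V] (A : Matrix V V ℝ) (hA : A.IsHermitian) (w : V) :
    ∃ x : V → ℝ, (∑ v, (x v)^2 = 1) ∧ hA.eigenvalues w = ∑ v, x v * (∑ u, A v u * x u) := by
  refine ⟨⇑(hA.eigenvectorBasis w), ?_, ?_⟩
  · have hnorm := hA.eigenvectorBasis.orthonormal.1 w
    have h1 := EuclideanSpace.norm_eq (hA.eigenvectorBasis w)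
    rw [hnorm] at h1
    have h3 : (∑ v, ‖(hA.eigenvectorBasis w) v‖^2) = 1 := by
      have h4 := congrArg (·^2) h1.symm
      simpa [Real.sq_sqrt (Finset.sum_nonneg fun v _ => sq_nonneg _)] using h4
    simpa [Real.norm_eq_abs, sq_abs] using h3
  · rw [hA.eigenvalues_eq w]
    simp only [RCLike.re_to_real, star_trivial, dotProduct, Matrix.mulVec,
      dotProduct]

lemma myDegSum (G : SimpleGraph V) [Fintype V] [DecidableEq V] [DecidableRel G.Adj]
    (f : V → ℝ) (v : V) :
    ∑ u, (if G.Adj v u then f v else 0) = (G.degree v : ℝ) * f v := by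
  rw [← Finset.sum_filter, ← SimpleGraph.neighborFinset_eq_filter, Finset.sum_const,
    SimpleGraph.card_neighborFinset_eq_degree, nsmul_eq_mul]

lemma myQuadform (G : SimpleGraph V) [Fintype V] [DecidableEq V] [DecidableRel G.Adj]
    (x : V → ℝ) :
    2 * (∑ v, x v * (∑ u, signlessLap G v u * x u))
      = ∑ v, ∑ u, (if G.Adj v u then (x v + x u)^2 else 0) := by
  have hQ : ∀ v, (∑ u, signlessLap G v u * x u)
      = (G.degree v : ℝ) * x v + ∑ u, (if G.Adj v u then x u else 0) := by
    intro v
    have : ∀ u, signlessLap G v u * x u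
        = (if v = u then (G.degree v : ℝ) * x u else 0) + (if G.Adj v u then x u else 0) := by
      intro u
      simp [signlessLap, Matrix.add_apply, Matrix.diagonal_apply, SimpleGraph.adjMatrix_apply,
        ite_mul, add_mul]
    rw [Finset.sum_congr rfl fun u _ => this u, Finset.sum_add_distrib, Finset.sum_ite_eq]
    simp
  have hsplit : ∀ v u, (if G.Adj v u then (x v + x u)^2 else 0)
      = (if G.Adj v u then (x v)^2 else 0) + (if G.Adj v u then (x u)^2 else 0)
        + 2 * (if G.Adj v u then x v * x u else 0) := by
    intro v u
    by_cases h : G.Adj v u <;> simp [h] <;> ring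
  have hrhs : ∑ v, ∑ u, (if G.Adj v u then (x v + x u)^2 else 0)
      = (∑ v, (G.degree v : ℝ) * (x v)^2) + (∑ v, (G.degree v : ℝ) * (x v)^2)
        + 2 * ∑ v, ∑ u, (if G.Adj v u then x v * x u else 0) := by
    have h1 : ∑ v, ∑ u, (if G.Adj v u then (x v)^2 else 0)
        = ∑ v, (G.degree v : ℝ) * (x v)^2 :=
      Finset.sum_congr rfl fun v _ => myDegSum G (fun v => (x v)^2) v
    have h2 : ∑ v, ∑ u, (if G.Adj v u then (x u)^2 else 0)
        = ∑ v, (G.degree v : ℝ) * (x v)^2 := by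
      rw [Finset.sum_comm]
      refine Finset.sum_congr rfl fun u _ => ?_
      rw [← myDegSum G (fun v => (x v)^2) u]
      exact Finset.sum_congr rfl fun v _ => if_congr (G.adj_comm v u) rfl rfl
    calc ∑ v, ∑ u, (if G.Adj v u then (x v + x u)^2 else 0)
        = ∑ v, ∑ u, ((if G.Adj v u then (x v)^2 else 0) + (if G.Adj v u then (x u)^2 else 0)
          + 2 * (if G.Adj v u then x v * x u else 0)) := by
          refine Finset.sum_congr rfl fun v _ => Finset.sum_congr rfl fun u _ => hsplit v u
      _ = (∑ v, ∑ u, (if G.Adj v u then (x v)^2 else 0))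
          + (∑ v, ∑ u, (if G.Adj v u then (x u)^2 else 0))
          + 2 * ∑ v, ∑ u, (if G.Adj v u then x v * x u else 0) := by
          simp [Finset.sum_add_distrib, Finset.mul_sum]
      _ = _ := by rw [h1, h2]
  have hlhs : ∑ v, x v * (∑ u, signlessLap G v u * x u)
      = (∑ v, (G.degree v : ℝ) * (x v)^2) + ∑ v, ∑ u, (if G.Adj v u then x v * x u else 0) := by
    rw [← Finset.sum_add_distrib]
    refine Finset.sum_congr rfl fun v _ => ?_
    rw [hQ v, mul_add, Finset.mul_sum]
    congr 1
    · ring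
    · refine Finset.sum_congr rfl fun u _ => ?_
      by_cases h : G.Adj v u <;> simp [h]
  rw [hlhs, hrhs]
  ring

lemma myFiberTrick {k : ℕ} [Fintype V] [DecidableEq V] (cl : V → Fin k) (f : V → ℝ)
    (g : Fin k → ℝ) :
    ∑ v, f v * g (cl v) = ∑ j, (∑ v ∈ Finset.univ.filter (fun v => cl v = j), f v) * g j := by
  rw [← Finset.sum_fiberwise Finset.univ cl (fun v => f v * g (cl v))]
  refine Finset.sum_congr rfl fun j _ => ?_
  rw [Finset.sum_mul]
  refine Finset.sum_congr rfl fun v hv => ?_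
  rw [(Finset.mem_filter.1 hv).2]

theorem stmt15 (G : SimpleGraph V) [Fintype V] [DecidableEq V] [DecidableRel G.Adj]
    (χ : ℕ) (hχ : G.chromaticNumber = (χ : ℕ∞)) :
    qIndex G ≤ 2 * (1 - 1 / (χ : ℝ)) * (Fintype.card V : ℝ) := by
  rcases isEmpty_or_nonempty V with hE | hNE
  · rw [qIndex, Real.iSup_of_isEmpty]
    have h0 : (Fintype.card V : ℝ) = 0 := by simp
    rw [h0, mul_zero]
  · apply ciSup_le
    intro w
    have hcol : G.Colorable χ := chromaticNumber_le_iff_colorable.mp (le_of_eq hχ)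
    obtain ⟨C⟩ := hcol
    obtain ⟨x, hxnorm, hev⟩ := myRayleigh (signlessLap G) (signlessLap_isHermitian G) w
    set n : ℝ := (Fintype.card V : ℝ) with hn
    have hχpos : 0 < χ := (C (Classical.arbitrary V)).pos
    set cl : V → Fin χ := fun v => C v with hcl
    have h2ev : 2 * (signlessLap_isHermitian G).eigenvalues w
        = ∑ v, ∑ u, (if G.Adj v u then (x v + x u)^2 else 0) := by
      rw [hev]; exact myQuadform G x
    have hcross : ∑ v, ∑ u, (if G.Adj v u then (x v + x u)^2 else 0)
        ≤ ∑ v, ∑ u, (if cl v ≠ cl u then (x v + x u)^2 else 0) := by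
      refine Finset.sum_le_sum fun v _ => Finset.sum_le_sum fun u _ => ?_
      by_cases h : G.Adj v u
      · rw [if_pos h, if_pos (C.valid h)]
      · rw [if_neg h]
        by_cases h2 : cl v ≠ cl u
        · rw [if_pos h2]; positivity
        · rw [if_neg h2]
    rcases eq_or_lt_of_le (Nat.one_le_iff_ne_zero.mpr hχpos.ne') with hχ1 | hχ2
    · -- χ = 1 : no cross-color pairs at all
      have hzero : ∑ v, ∑ u, (if cl v ≠ cl u then (x v + x u)^2 else 0) = 0 := by
        refine Finset.sum_eq_zero fun v _ => Finset.sum_eq_zero fun u _ => ?_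
        have hs : Subsingleton (Fin χ) := by rw [← hχ1]; infer_instance
        have : cl v = cl u := hs.elim _ _
        rw [if_neg (by simp [this])]
      have hrhs : 2 * (1 - 1 / (χ : ℝ)) * n = 0 := by
        rw [← hχ1]; norm_num
      rw [hrhs]
      nlinarith [h2ev, hcross, hzero]
    · -- χ ≥ 2 : main case
      have hk2 : 2 ≤ χ := hχ2
      set tt : Fin χ → ℝ := fun j => ∑ v ∈ Finset.univ.filter (fun v => cl v = j), (x v)^2
        with htt
      set sc : Fin χ → ℝ := fun j => ∑ v ∈ Finset.univ.filter (fun v => cl v = j), x v with hsc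
      set mm : Fin χ → ℝ := fun j => ((Finset.univ.filter (fun v => cl v = j)).card : ℝ)
        with hmm
      have ht0 : ∀ j, 0 ≤ tt j := fun j => Finset.sum_nonneg fun v _ => sq_nonneg _
      have hm0 : ∀ j, 0 ≤ mm j := fun j => Nat.cast_nonneg _
      have hst : ∀ j, (sc j)^2 ≤ mm j * tt j := fun j => sq_sum_le_card_mul_sum_sq
      have htsum : ∑ j, tt j = 1 := by
        rw [htt, Finset.sum_fiberwise Finset.univ cl (fun v => (x v)^2)]
        exact hxnorm
      have hmsum : ∑ j, mm j = n := by
        have hc : ∀ j, mm j = ∑ _v ∈ Finset.univ.filter (fun v => cl v = j), (1:ℝ) := by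
          intro j; rw [Finset.sum_const, nsmul_eq_mul, mul_one, hmm]
        rw [Finset.sum_congr rfl fun j _ => hc j,
          Finset.sum_fiberwise Finset.univ cl (fun _ => (1:ℝ)), Finset.sum_const,
          Finset.card_univ, nsmul_eq_mul, mul_one]
      have hinner : ∀ (f : V → ℝ) (v : V),
          (∑ u, if cl v = cl u then f u else 0)
            = ∑ u ∈ Finset.univ.filter (fun u => cl u = cl v), f u := by
        intro f v
        rw [← Finset.sum_filter]
        congr 1
        exact Finset.filter_congr fun u _ => by rw [eq_comm]
      -- full sum
      have hA1 : (∑ v : V, ∑ _u : V, (x v)^2) = n * 1 := by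
        simp only [Finset.sum_const, Finset.card_univ, nsmul_eq_mul]
        rw [← Finset.mul_sum, hxnorm]
      have hA2 : (∑ _v : V, ∑ u : V, (x u)^2) = n * 1 := by
        rw [Finset.sum_congr rfl fun v _ => hxnorm, Finset.sum_const, Finset.card_univ,
          nsmul_eq_mul]
      have hA3 : (∑ v : V, ∑ u : V, x v * x u) = (∑ v, x v)^2 := by
        rw [sq, Finset.sum_mul_sum]
      have hfull : (∑ v, ∑ u, (x v + x u)^2) = 2*n + 2*(∑ v, x v)^2 := by
        have hexp : ∀ v u : V, (x v + x u)^2 = (x v)^2 + (x u)^2 + 2*(x v * x u) :=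
          fun v u => by ring
        calc ∑ v, ∑ u, (x v + x u)^2
            = ∑ v, ∑ u, ((x v)^2 + (x u)^2 + 2*(x v * x u)) :=
              Finset.sum_congr rfl fun v _ => Finset.sum_congr rfl fun u _ => hexp v u
          _ = (∑ v : V, ∑ _u : V, (x v)^2) + (∑ _v : V, ∑ u : V, (x u)^2)
              + 2 * (∑ v, ∑ u, x v * x u) := by
              simp only [Finset.sum_add_distrib, ← Finset.mul_sum]
          _ = 2*n + 2*(∑ v, x v)^2 := by rw [hA1, hA2, hA3]; ring
      -- same-color sums
      have hB1 : (∑ v, ∑ u, if cl v = cl u then (x v)^2 else 0) = ∑ j, mm j * tt j := by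
        have hi : ∀ v, (∑ u, if cl v = cl u then (x v)^2 else 0) = (x v)^2 * mm (cl v) := by
          intro v
          rw [← Finset.sum_filter, Finset.sum_const, nsmul_eq_mul, mul_comm, hmm]
          congr 2
          exact congrArg Finset.card (Finset.filter_congr fun u _ => eq_comm)
        rw [Finset.sum_congr rfl fun v _ => hi v, myFiberTrick cl (fun v => (x v)^2) mm]
        exact Finset.sum_congr rfl fun j _ => by rw [mul_comm, htt]
      have hB2 : (∑ v, ∑ u, if cl v = cl u then (x u)^2 else 0) = ∑ j, mm j * tt j := by
        rw [Finset.sum_comm, ← hB1]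
        exact Finset.sum_congr rfl fun u _ => Finset.sum_congr rfl fun v _ =>
          if_congr eq_comm rfl rfl
      have hB3 : (∑ v, ∑ u, if cl v = cl u then x v * x u else 0) = ∑ j, (sc j)^2 := by
        have hi : ∀ v, (∑ u, if cl v = cl u then x v * x u else 0) = x v * sc (cl v) := by
          intro v
          have hpt : ∀ u, (if cl v = cl u then x v * x u else 0)
              = x v * (if cl v = cl u then x u else 0) := by
            intro u; by_cases h : cl v = cl u <;> simp [h]
          rw [Finset.sum_congr rfl fun u _ => hpt u, ← Finset.mul_sum, hinner x v, hsc]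
        rw [Finset.sum_congr rfl fun v _ => hi v, myFiberTrick cl x sc]
        exact Finset.sum_congr rfl fun j _ => by rw [sq]
      have hsame : (∑ v, ∑ u, if cl v = cl u then (x v + x u)^2 else 0)
          = 2 * (∑ j, mm j * tt j) + 2 * (∑ j, (sc j)^2) := by
        have hexp : ∀ v u : V, (if cl v = cl u then (x v + x u)^2 else 0)
            = (if cl v = cl u then (x v)^2 else 0) + (if cl v = cl u then (x u)^2 else 0)
              + 2*(if cl v = cl u then x v * x u else 0) := by
          intro v u
          by_cases h : cl v = cl u
          · simp only [if_pos h]; ring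
          · simp [h]
        calc (∑ v, ∑ u, if cl v = cl u then (x v + x u)^2 else 0)
            = ∑ v, ∑ u, ((if cl v = cl u then (x v)^2 else 0)
              + (if cl v = cl u then (x u)^2 else 0)
              + 2*(if cl v = cl u then x v * x u else 0)) :=
              Finset.sum_congr rfl fun v _ => Finset.sum_congr rfl fun u _ => hexp v u
          _ = (∑ v, ∑ u, if cl v = cl u then (x v)^2 else 0)
              + (∑ v, ∑ u, if cl v = cl u then (x u)^2 else 0)
              + 2 * (∑ v, ∑ u, if cl v = cl u then x v * x u else 0) := by
              simp only [Finset.sum_add_distrib, ← Finset.mul_sum]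
          _ = 2 * (∑ j, mm j * tt j) + 2 * (∑ j, (sc j)^2) := by
              rw [hB1, hB2, hB3]; ring
      have hdiff : (∑ v, ∑ u, if cl v ≠ cl u then (x v + x u)^2 else 0)
          = (∑ v, ∑ u, (x v + x u)^2)
            - (∑ v, ∑ u, if cl v = cl u then (x v + x u)^2 else 0) := by
        rw [← Finset.sum_sub_distrib]
        refine Finset.sum_congr rfl fun v _ => ?_
        rw [← Finset.sum_sub_distrib]
        refine Finset.sum_congr rfl fun u _ => ?_
        by_cases h : cl v = cl u <;> simp [h]
      have hS : ∑ j, sc j = ∑ v, x v := by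
        rw [hsc, Finset.sum_fiberwise Finset.univ cl x]
      have hcore := myCore χ hk2 tt sc mm ht0 hm0 hst htsum
      have hsum_expand : ∑ j, (((χ:ℝ)-2)/χ * mm j + mm j * tt j + (sc j)^2)
          = ((χ:ℝ)-2)/χ * n + (∑ j, mm j * tt j) + (∑ j, (sc j)^2) := by
        rw [Finset.sum_add_distrib, Finset.sum_add_distrib, ← Finset.mul_sum, hmsum]
      have hcore' : (∑ v, x v)^2
          ≤ ((χ:ℝ)-2)/χ * n + (∑ j, mm j * tt j) + (∑ j, (sc j)^2) := by
        rw [← hsum_expand, ← hS]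
        exact hcore
      have hχR : (0:ℝ) < χ := by exact_mod_cast hχpos
      have harith : 2*n + 2*(((χ:ℝ)-2)/χ * n) = 2*(2 * (1 - 1 / (χ:ℝ)) * n) := by
        field_simp
        ring
      linarith [h2ev, hcross, hdiff, hfull, hsame, hcore', harith]
end
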